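/- Let X be a real random variable with probability density f(x) = K₀(|x|)/π and let m₀(α) := E[tanh(αX)·X]. Then for every α ∈ [0, 0.31), α - 3α³ ≤ m₀(α) ≤ α - 3α³/(1 + 8α). -/

import Mathlib

open Real MeasureTheory

/-- Modified Bessel function of the second kind of order 0, via its integral
representation `K₀(x) = ∫₀^∞ exp(-x cosh t) dt`. -/
noncomputable def besselK0 (x : ℝ) : ℝ :=
  ∫ t in Set.Ioi (0 : ℝ), Real.exp (-x * Real.cosh t)

/-- The probability density `x ↦ K₀(|x|)/π` on ℝ. -/
noncomputable def besselDensity (x : ℝ) : ℝ := besselK0 |x| / Real.pi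

/-- The expectation `m₀(α) = E[tanh(αX)·X]`. -/
noncomputable def m0Exp (α : ℝ) : ℝ :=
  ∫ x : ℝ, Real.tanh (α * x) * x * besselDensity x

open Set Filter Topology Function

lemma hasDerivAt_tanh (x : ℝ) : HasDerivAt Real.tanh (1 - Real.tanh x ^ 2) x := by
  have h := ((Real.hasDerivAt_sinh x).fun_div (Real.hasDerivAt_cosh x) (Real.cosh_pos x).ne')
  have : ∀ y, Real.tanh y = Real.sinh y / Real.cosh y := Real.tanh_eq_sinh_div_cosh
  simp only [← this] at h
  refine h.congr_deriv ?_
  rw [Real.tanh_eq_sinh_div_cosh]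
  have hc := (Real.cosh_pos x).ne'
  field_simp

lemma mono_aux {f f' : ℝ → ℝ} (hd : ∀ x, HasDerivAt f (f' x) x)
    (h0 : ∀ x, 0 < x → 0 ≤ f' x) {y : ℝ} (hy : 0 ≤ y) : f 0 ≤ f y := by
  have hmono : MonotoneOn f (Ici 0) := by
    apply monotoneOn_of_deriv_nonneg (convex_Ici 0)
    · exact fun x _ => (hd x).continuousAt.continuousWithinAt
    · intro x hx
      exact ((hd x).differentiableAt).differentiableWithinAt
    · intro x hx
      rw [interior_Ici] at hx
      rw [(hd x).deriv]
      exact h0 x hx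
  exact hmono self_mem_Ici hy hy

lemma tanh_nonneg' {y : ℝ} (hy : 0 ≤ y) : 0 ≤ Real.tanh y := by
  rw [Real.tanh_eq_sinh_div_cosh]
  exact div_nonneg (by simpa using Real.sinh_le_sinh.2 hy) (Real.cosh_pos y).le

lemma tanh_le_self {y : ℝ} (hy : 0 ≤ y) : Real.tanh y ≤ y := by
  have := mono_aux (f := fun x => x - Real.tanh x) (f' := fun x => Real.tanh x ^ 2)
    (fun x => by simpa using (hasDerivAt_id x).fun_sub (hasDerivAt_tanh x))
    (fun x _ => sq_nonneg _) hy
  simpa [Real.tanh_zero] using this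

lemma tanh_lower {y : ℝ} (hy : 0 ≤ y) : y - y ^ 3 / 3 ≤ Real.tanh y := by
  have := mono_aux (f := fun x => Real.tanh x - x + x ^ 3 / 3)
    (f' := fun x => x ^ 2 - Real.tanh x ^ 2)
    (fun x => by
      have h1 : HasDerivAt (fun x : ℝ => x ^ 3 / 3) (x ^ 2) x := by
        simpa using ((hasDerivAt_pow 3 x).div_const 3)
      refine (((hasDerivAt_tanh x).fun_sub (hasDerivAt_id x)).fun_add h1).congr_deriv ?_
      ring)
    (fun x hx => by
      have h1 := tanh_nonneg' hx.le
      have h2 := tanh_le_self hx.le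
      nlinarith) hy
  simp only [Real.tanh_zero] at this
  nlinarith [this]

lemma tanh_upper {y : ℝ} (hy : 0 ≤ y) :
    3 * (1 + y ^ 2) * Real.tanh y ≤ y * (3 + 2 * y ^ 2) := by
  have := mono_aux (f := fun x => x * (3 + 2 * x ^ 2) - 3 * (1 + x ^ 2) * Real.tanh x)
    (f' := fun x => 3 * (x - Real.tanh x) ^ 2 + 3 * x ^ 2 * Real.tanh x ^ 2)
    (fun x => by
      have h1 : HasDerivAt (fun x : ℝ => x * (3 + 2 * x ^ 2)) (3 + 6 * x ^ 2) x := by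
        have : HasDerivAt (fun x : ℝ => x * (3 + 2 * x ^ 2)) (1 * (3 + 2 * x^2) + x * (0 + 2 * (2 * x^(2-1)))) x :=
          (hasDerivAt_id x).mul ((hasDerivAt_const x 3).add ((hasDerivAt_pow 2 x).const_mul 2))
        convert this using 1 <;> norm_num <;> ring
      have h2 : HasDerivAt (fun x : ℝ => 3 * (1 + x ^ 2) * Real.tanh x)
          ((3 * (0 + 2 * x ^ (2-1))) * Real.tanh x + 3 * (1 + x ^ 2) * (1 - Real.tanh x ^ 2)) x := by
        have := (((hasDerivAt_const x 1).fun_add (hasDerivAt_pow 2 x)).const_mul 3).fun_mul (hasDerivAt_tanh x)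
        exact this.congr_deriv (by norm_num)
      refine (h1.fun_sub h2).congr_deriv ?_
      ring)
    (fun x _ => by positivity) hy
  simp only [Real.tanh_zero] at this
  nlinarith [this]


lemma sech_le {t : ℝ} (ht : 0 ≤ t) : (Real.cosh t)⁻¹ ≤ 2 * Real.exp (-t) := by
  rw [inv_le_iff_one_le_mul₀ (Real.cosh_pos t)]
  rw [Real.cosh_eq, Real.exp_neg]
  have h1 := Real.exp_pos t
  nlinarith [inv_mul_cancel₀ h1.ne', sq_nonneg (Real.exp t)⁻¹]

lemma sech_pow_le {t : ℝ} (ht : 0 ≤ t) (k : ℕ) (hk : 1 ≤ k) :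
    (Real.cosh t)⁻¹ ^ k ≤ 2 * Real.exp (-t) := by
  calc (Real.cosh t)⁻¹ ^ k ≤ (Real.cosh t)⁻¹ ^ 1 := by
        apply pow_le_pow_of_le_one (by positivity) ?_ hk
        rw [inv_le_one_iff₀]; right; exact Real.one_le_cosh t
    _ = (Real.cosh t)⁻¹ := pow_one _
    _ ≤ _ := sech_le ht

lemma sech_pow_integrable (k : ℕ) (hk : 1 ≤ k) :
    IntegrableOn (fun t => (Real.cosh t)⁻¹ ^ k) (Set.Ioi (0:ℝ)) := by
  apply Integrable.mono ((exp_neg_integrableOn_Ioi 0 one_pos).const_mul 2)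
  · exact ((Real.continuous_cosh.inv₀ (fun t => (Real.cosh_pos t).ne')).pow k).aestronglyMeasurable.restrict
  · filter_upwards [ae_restrict_mem measurableSet_Ioi] with t ht
    have h1 : (0:ℝ) < Real.cosh t := Real.cosh_pos t
    rw [Real.norm_eq_abs, Real.norm_eq_abs, abs_of_nonneg (by positivity),
      abs_of_nonneg (by positivity)]
    simpa using sech_pow_le (le_of_lt ht) k hk

lemma hasDerivAt_arctan_sinh (t : ℝ) :
    HasDerivAt (fun t => Real.arctan (Real.sinh t)) ((Real.cosh t)⁻¹) t := by
  have h := (Real.hasDerivAt_arctan (Real.sinh t)).comp t (Real.hasDerivAt_sinh t)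
  refine h.congr_deriv ?_
  have hc := (Real.cosh_pos t).ne'
  have h2 : 1 + Real.sinh t ^ 2 = Real.cosh t ^ 2 := by rw [Real.cosh_sq]; ring
  rw [h2]
  field_simp

lemma tendsto_sinh_atTop : Tendsto Real.sinh atTop atTop := by
  apply tendsto_atTop_mono' atTop ?_
    ((tendsto_exp_atTop.atTop_div_const two_pos).atTop_add
      (tendsto_const_nhds (x := (-(1/2) : ℝ))))
  filter_upwards [eventually_ge_atTop (0:ℝ)] with x hx
  rw [Real.sinh_eq]
  have : Real.exp (-x) ≤ 1 := Real.exp_le_one_iff.2 (by linarith)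
  linarith

lemma tendsto_arctan_sinh :
    Tendsto (fun t => Real.arctan (Real.sinh t)) atTop (𝓝 (π/2)) :=
  (tendsto_nhds_of_tendsto_nhdsWithin Real.tendsto_arctan_atTop).comp tendsto_sinh_atTop

lemma integral_sech : ∫ t in Set.Ioi (0:ℝ), (Real.cosh t)⁻¹ = π/2 := by
  have := integral_Ioi_of_hasDerivAt_of_tendsto' (f := fun t => Real.arctan (Real.sinh t))
    (fun x _ => hasDerivAt_arctan_sinh x)
    (by simpa using sech_pow_integrable 1 le_rfl) tendsto_arctan_sinh
  simpa using this


lemma tendsto_cosh_atTop : Tendsto Real.cosh atTop atTop := by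
  apply tendsto_atTop_mono (fun x => ?_) (tendsto_exp_atTop.atTop_div_const two_pos)
  rw [Real.cosh_eq]
  have := Real.exp_pos (-x)
  linarith

lemma tendsto_sech_pow (k : ℕ) (hk : 1 ≤ k) :
    Tendsto (fun t => (Real.cosh t)⁻¹ ^ k) atTop (𝓝 0) := by
  have h := (tendsto_inv_atTop_zero.comp tendsto_cosh_atTop).pow k
  simpa [zero_pow (by omega : k ≠ 0)] using h

lemma tendsto_sinh_div_cosh_pow (k : ℕ) (hk : 2 ≤ k) :
    Tendsto (fun t => Real.sinh t / Real.cosh t ^ k) atTop (𝓝 0) := by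
  apply squeeze_zero' (g := fun t => (Real.cosh t)⁻¹ ^ (k-1))
  · filter_upwards [eventually_ge_atTop (0:ℝ)] with t ht
    have := Real.cosh_pos t
    have : 0 ≤ Real.sinh t := by simpa using Real.sinh_le_sinh.2 ht
    positivity
  · filter_upwards [eventually_ge_atTop (0:ℝ)] with t ht
    have hc := Real.cosh_pos t
    have hs : Real.sinh t ≤ Real.cosh t := (Real.sinh_lt_cosh t).le
    rw [div_le_iff₀ (by positivity), inv_pow, inv_mul_eq_div, le_div_iff₀ (by positivity)]
    calc Real.sinh t * Real.cosh t ^ (k-1) ≤ Real.cosh t * Real.cosh t ^ (k-1) := by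
          apply mul_le_mul_of_nonneg_right hs (by positivity)
      _ = Real.cosh t ^ k := by
          rw [← pow_succ']; congr 1; omega
  · exact tendsto_sech_pow (k-1) (by omega)

lemma hasDerivAt_sdc2 (t : ℝ) :
    HasDerivAt (fun t => Real.sinh t / Real.cosh t ^ 2)
      (2 * (Real.cosh t)⁻¹ ^ 3 - (Real.cosh t)⁻¹) t := by
  have hc := (Real.cosh_pos t).ne'
  have h := (Real.hasDerivAt_sinh t).fun_div ((Real.hasDerivAt_cosh t).fun_pow 2) (pow_ne_zero 2 hc)
  refine h.congr_deriv ?_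
  have hs : Real.sinh t ^ 2 = Real.cosh t ^ 2 - 1 := Real.sinh_sq t
  field_simp
  linear_combination (-2 * Real.cosh t) * hs

lemma hasDerivAt_sdc4 (t : ℝ) :
    HasDerivAt (fun t => Real.sinh t / Real.cosh t ^ 4)
      (4 * (Real.cosh t)⁻¹ ^ 5 - 3 * (Real.cosh t)⁻¹ ^ 3) t := by
  have hc := (Real.cosh_pos t).ne'
  have h := (Real.hasDerivAt_sinh t).fun_div ((Real.hasDerivAt_cosh t).fun_pow 4) (pow_ne_zero 4 hc)
  refine h.congr_deriv ?_
  have hs : Real.sinh t ^ 2 = Real.cosh t ^ 2 - 1 := Real.sinh_sq t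
  field_simp
  linear_combination (-4 * Real.cosh t ^ 3) * hs

lemma hasDerivAt_sdc6 (t : ℝ) :
    HasDerivAt (fun t => Real.sinh t / Real.cosh t ^ 6)
      (6 * (Real.cosh t)⁻¹ ^ 7 - 5 * (Real.cosh t)⁻¹ ^ 5) t := by
  have hc := (Real.cosh_pos t).ne'
  have h := (Real.hasDerivAt_sinh t).fun_div ((Real.hasDerivAt_cosh t).fun_pow 6) (pow_ne_zero 6 hc)
  refine h.congr_deriv ?_
  have hs : Real.sinh t ^ 2 = Real.cosh t ^ 2 - 1 := Real.sinh_sq t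
  field_simp
  linear_combination (-6 * Real.cosh t ^ 5) * hs


lemma integral_sech3 : ∫ t in Set.Ioi (0:ℝ), (Real.cosh t)⁻¹ ^ 3 = π/4 := by
  have h := integral_Ioi_of_hasDerivAt_of_tendsto'
    (f := fun t => (Real.sinh t / Real.cosh t ^ 2 + Real.arctan (Real.sinh t))/2)
    (f' := fun t => (Real.cosh t)⁻¹ ^ 3) (a := 0) (m := π/4)
    (fun x _ => by
      have := ((hasDerivAt_sdc2 x).fun_add (hasDerivAt_arctan_sinh x)).div_const 2
      exact this.congr_deriv (by ring))
    (sech_pow_integrable 3 (by norm_num))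
    (by
      have := ((tendsto_sinh_div_cosh_pow 2 le_rfl).add tendsto_arctan_sinh).div_const 2
      convert this using 2; ring)
  simpa using h

lemma integral_sech5 : ∫ t in Set.Ioi (0:ℝ), (Real.cosh t)⁻¹ ^ 5 = 3*π/16 := by
  have h := integral_Ioi_of_hasDerivAt_of_tendsto'
    (f := fun t => Real.sinh t / Real.cosh t ^ 4 / 4
      + 3/8 * (Real.sinh t / Real.cosh t ^ 2 + Real.arctan (Real.sinh t)))
    (f' := fun t => (Real.cosh t)⁻¹ ^ 5) (a := 0) (m := 3*π/16)
    (fun x _ => by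
      have := ((hasDerivAt_sdc4 x).div_const 4).fun_add
        (((hasDerivAt_sdc2 x).fun_add (hasDerivAt_arctan_sinh x)).const_mul (3/8))
      exact this.congr_deriv (by ring))
    (sech_pow_integrable 5 (by norm_num))
    (by
      have := ((tendsto_sinh_div_cosh_pow 4 (by norm_num)).div_const 4).add
        (((tendsto_sinh_div_cosh_pow 2 le_rfl).add tendsto_arctan_sinh).const_mul (3/8))
      convert this using 2; ring)
  simpa using h

lemma integral_sech7 : ∫ t in Set.Ioi (0:ℝ), (Real.cosh t)⁻¹ ^ 7 = 5*π/32 := by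
  have h := integral_Ioi_of_hasDerivAt_of_tendsto'
    (f := fun t => Real.sinh t / Real.cosh t ^ 6 / 6
      + 5/24 * (Real.sinh t / Real.cosh t ^ 4)
      + 5/16 * (Real.sinh t / Real.cosh t ^ 2 + Real.arctan (Real.sinh t)))
    (f' := fun t => (Real.cosh t)⁻¹ ^ 7) (a := 0) (m := 5*π/32)
    (fun x _ => by
      have := (((hasDerivAt_sdc6 x).div_const 6).fun_add
        ((hasDerivAt_sdc4 x).const_mul (5/24))).fun_add
        (((hasDerivAt_sdc2 x).fun_add (hasDerivAt_arctan_sinh x)).const_mul (5/16))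
      exact this.congr_deriv (by ring))
    (sech_pow_integrable 7 (by norm_num))
    (by
      have := (((tendsto_sinh_div_cosh_pow 6 (by norm_num)).div_const 6).add
        ((tendsto_sinh_div_cosh_pow 4 (by norm_num)).const_mul (5/24))).add
        (((tendsto_sinh_div_cosh_pow 2 le_rfl).add tendsto_arctan_sinh).const_mul (5/16))
      convert this using 2; ring)
  simpa using h


lemma besselK0_nonneg (x : ℝ) : 0 ≤ besselK0 x :=
  integral_nonneg fun t => (Real.exp_pos _).le

lemma besselDensity_nonneg (x : ℝ) : 0 ≤ besselDensity x :=
  div_nonneg (besselK0_nonneg _) Real.pi_pos.le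

lemma cosh_ge_half (t : ℝ) : (1 + t) / 2 ≤ Real.cosh t := by
  have h := Real.add_one_le_exp t
  have h2 := Real.exp_pos (-t)
  rw [Real.cosh_eq]; linarith

lemma integral_exp_neg_mul_Ioi {b : ℝ} (hb : 0 < b) :
    ∫ t in Set.Ioi (0:ℝ), Real.exp (-b * t) = 1 / b := by
  have h := integral_Ioi_of_hasDerivAt_of_tendsto'
    (f := fun t => -Real.exp (-b * t) / b)
    (f' := fun t => Real.exp (-b * t)) (a := 0) (m := 0)
    (fun x _ => by
      have h1 : HasDerivAt (fun t : ℝ => -b * t) (-b) x := by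
        simpa using (hasDerivAt_id x).const_mul (-b)
      have := ((Real.hasDerivAt_exp _).comp x h1).fun_neg.div_const b
      refine this.congr_deriv ?_
      field_simp
    )
    (exp_neg_integrableOn_Ioi 0 hb)
    (by
      have h0 : Tendsto (fun t : ℝ => -b * t) atTop atBot := by
        simp only [neg_mul]
        apply tendsto_neg_atBot_iff.2
        exact (tendsto_const_mul_atTop_of_pos hb).2 tendsto_id
      have := (Real.tendsto_exp_atBot.comp h0).neg.div_const b
      simpa using this)
  simpa [neg_div] using h

/-- The integrand of the moment double integral. -/
lemma exp_cosh_bound {x t : ℝ} (hx : 0 < x) (ht : 0 ≤ t) :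
    Real.exp (-x * Real.cosh t) ≤ Real.exp (-(x/2)) * Real.exp (-(x/2) * t) := by
  rw [← Real.exp_add, Real.exp_le_exp]
  have h := cosh_ge_half t
  nlinarith

lemma besselK0_le {x : ℝ} (hx : 0 < x) : besselK0 x ≤ Real.exp (-(x/2)) * (2 / x) := by
  have h := integral_mono_of_nonneg (f := fun t => Real.exp (-x * Real.cosh t))
    (g := fun t => Real.exp (-(x/2)) * Real.exp (-(x/2) * t))
    (μ := volume.restrict (Set.Ioi 0))
    (Filter.Eventually.of_forall fun t => (Real.exp_pos _).le)
    ((exp_neg_integrableOn_Ioi 0 (by positivity : (0:ℝ) < x/2)).const_mul _)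
    ?_
  · calc besselK0 x ≤ ∫ t in Set.Ioi (0:ℝ), Real.exp (-(x/2)) * Real.exp (-(x/2) * t) := h
      _ = Real.exp (-(x/2)) * (2/x) := by
          rw [integral_const_mul, integral_exp_neg_mul_Ioi (by positivity)]
          rw [one_div, eq_comm]
          congr 1
          rw [eq_comm, inv_eq_iff_eq_inv]
          field_simp
  · filter_upwards [ae_restrict_mem measurableSet_Ioi] with t ht
    exact exp_cosh_bound hx (le_of_lt ht)

lemma besselK0_stronglyMeasurable : StronglyMeasurable besselK0 := by
  apply StronglyMeasurable.integral_prod_right' (f := fun p : ℝ × ℝ => Real.exp (-p.1 * Real.cosh p.2))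
  exact (Real.continuous_exp.comp ((continuous_fst.neg).mul (Real.continuous_cosh.comp continuous_snd))).stronglyMeasurable

lemma moment_majorant_integrable (k : ℕ) (hk : 1 ≤ k) :
    IntegrableOn (fun x : ℝ => 2 * (x ^ (k-1) * Real.exp (-(1/2) * x))) (Set.Ioi 0) := by
  apply Integrable.const_mul
  have h := integrableOn_rpow_mul_exp_neg_mul_rpow
    (s := ((k-1 : ℕ) : ℝ)) (p := 1) (b := 1/2) (lt_of_lt_of_le neg_one_lt_zero (Nat.cast_nonneg _)) one_pos (by norm_num)
  apply h.congr_fun ?_ measurableSet_Ioi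
  intro x hx
  simp only [Real.rpow_one, Real.rpow_natCast]

lemma prod_integrand_meas (k : ℕ) :
    Continuous (fun p : ℝ × ℝ => p.1 ^ k * Real.exp (-p.1 * Real.cosh p.2)) :=
  (continuous_fst.pow k).mul
    (Real.continuous_exp.comp ((continuous_fst.neg).mul (Real.continuous_cosh.comp continuous_snd)))

lemma slice_integrable {x : ℝ} (hx : 0 < x) (k : ℕ) :
    IntegrableOn (fun t => x ^ k * Real.exp (-x * Real.cosh t)) (Set.Ioi 0) := by
  apply Integrable.mono' (((exp_neg_integrableOn_Ioi 0 (by positivity : (0:ℝ) < x/2)).const_mul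
    (x ^ k * Real.exp (-(x/2)))))
  · exact ((continuous_const.mul (Real.continuous_exp.comp
      (continuous_const.mul Real.continuous_cosh))).aestronglyMeasurable).restrict
  · filter_upwards [ae_restrict_mem measurableSet_Ioi] with t ht
    rw [Real.norm_eq_abs, abs_of_nonneg (by positivity)]
    rw [mul_assoc]
    exact mul_le_mul_of_nonneg_left (exp_cosh_bound hx ht.le) (by positivity)

lemma x_pow_K0_le {x : ℝ} (hx : 0 < x) (k : ℕ) (hk : 1 ≤ k) :
    x ^ k * besselK0 x ≤ 2 * (x ^ (k-1) * Real.exp (-(1/2) * x)) := by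
  have h := besselK0_le hx
  calc x ^ k * besselK0 x ≤ x ^ k * (Real.exp (-(x/2)) * (2/x)) := by
        exact mul_le_mul_of_nonneg_left h (by positivity)
    _ = 2 * (x ^ (k-1) * Real.exp (-(1/2) * x)) := by
        have hx' : x ≠ 0 := hx.ne'
        have hpow : x ^ k = x ^ (k-1) * x := by
          rw [← pow_succ]; congr 1; omega
        rw [hpow]
        have : -(x/2) = -(1/2) * x := by ring
        rw [this]
        field_simp

lemma prod_integrable (k : ℕ) (hk : 1 ≤ k) :
    Integrable (fun p : ℝ × ℝ => p.1 ^ k * Real.exp (-p.1 * Real.cosh p.2))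
      ((volume.restrict (Set.Ioi 0)).prod (volume.restrict (Set.Ioi 0))) := by
  have hmeas := ((prod_integrand_meas k).aestronglyMeasurable (μ := (volume.restrict (Set.Ioi (0:ℝ))).prod (volume.restrict (Set.Ioi (0:ℝ)))))
  rw [integrable_prod_iff hmeas]
  constructor
  · filter_upwards [ae_restrict_mem measurableSet_Ioi] with x hx
    exact slice_integrable hx k
  · apply Integrable.mono' (moment_majorant_integrable k hk)
    · exact hmeas.norm.integral_prod_right'
    · filter_upwards [ae_restrict_mem measurableSet_Ioi] with x hx
      have hnorm : ∀ t : ℝ, ‖x ^ k * Real.exp (-x * Real.cosh t)‖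
          = x ^ k * Real.exp (-x * Real.cosh t) := fun t => by
        rw [Real.norm_eq_abs, abs_of_nonneg
          (mul_nonneg (pow_nonneg (le_of_lt hx) _) (Real.exp_pos _).le)]
      rw [Real.norm_eq_abs, abs_of_nonneg (integral_nonneg fun t => norm_nonneg _)]
      calc (∫ t in Set.Ioi (0:ℝ), ‖x ^ k * Real.exp (-x * Real.cosh t)‖)
          = x ^ k * besselK0 x := by
            simp_rw [hnorm]
            rw [integral_const_mul]
            rfl
        _ ≤ _ := x_pow_K0_le hx k hk

lemma K0_moment_integrableOn (k : ℕ) (hk : 1 ≤ k) :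
    IntegrableOn (fun x => x ^ k * besselK0 x) (Set.Ioi 0) := by
  apply Integrable.mono' (moment_majorant_integrable k hk)
  · exact (((continuous_pow k).measurable.mul
      besselK0_stronglyMeasurable.measurable).aestronglyMeasurable).restrict
  · filter_upwards [ae_restrict_mem measurableSet_Ioi] with x hx
    rw [Real.norm_eq_abs, abs_of_nonneg
      (mul_nonneg (pow_nonneg (le_of_lt hx) _) (besselK0_nonneg _))]
    exact x_pow_K0_le hx k hk

lemma inner_gamma {c : ℝ} (hc : 1 ≤ c) (k : ℕ) :
    ∫ x in Set.Ioi (0:ℝ), x ^ k * Real.exp (-x * c) = (Nat.factorial k : ℝ) * (c⁻¹) ^ (k+1) := by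
  have hc0 : (0:ℝ) < c := lt_of_lt_of_le one_pos hc
  have h := Real.integral_rpow_mul_exp_neg_mul_Ioi (a := (k:ℝ)+1) (r := c)
    (by positivity) hc0
  have h2 : ∫ x in Set.Ioi (0:ℝ), x ^ k * Real.exp (-x * c)
      = ∫ t in Set.Ioi (0:ℝ), t ^ ((k:ℝ)+1-1) * Real.exp (-(c*t)) := by
    apply setIntegral_congr_fun measurableSet_Ioi
    intro x hx
    dsimp only
    rw [add_sub_cancel_right, Real.rpow_natCast]
    ring_nf
  rw [h2, h, one_div, ← Real.rpow_natCast c⁻¹ (k+1), Real.Gamma_nat_eq_factorial]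
  push_cast
  ring

lemma K0_moment_value (k : ℕ) (hk : 1 ≤ k) :
    ∫ x in Set.Ioi (0:ℝ), x ^ k * besselK0 x
      = (Nat.factorial k : ℝ) * ∫ t in Set.Ioi (0:ℝ), (Real.cosh t)⁻¹ ^ (k+1) := by
  have h1 : ∫ x in Set.Ioi (0:ℝ), x ^ k * besselK0 x
      = ∫ x in Set.Ioi (0:ℝ), ∫ t in Set.Ioi (0:ℝ), x ^ k * Real.exp (-x * Real.cosh t) := by
    apply setIntegral_congr_fun measurableSet_Ioi
    intro x _
    dsimp only
    rw [show besselK0 x = ∫ t in Set.Ioi (0:ℝ), Real.exp (-x * Real.cosh t) from rfl,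
      integral_const_mul]
  rw [h1, integral_integral_swap (prod_integrable k hk)]
  rw [← integral_const_mul]
  apply setIntegral_congr_fun measurableSet_Ioi
  intro t _
  exact inner_gamma (Real.one_le_cosh t) k


lemma besselDensity_meas : Measurable besselDensity := by
  have : besselDensity = fun x => besselK0 |x| / π := rfl
  rw [this]
  exact (besselK0_stronglyMeasurable.measurable.comp measurable_abs).div_const π

lemma besselMoment_integrableOn_Ioi (k : ℕ) (hk : 1 ≤ k) :
    IntegrableOn (fun x : ℝ => x ^ k * besselDensity x) (Set.Ioi 0) := by
  have h : IntegrableOn (fun x => x ^ k * besselK0 x / π) (Set.Ioi 0) :=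
    (K0_moment_integrableOn k hk).div_const π
  apply h.congr_fun ?_ measurableSet_Ioi
  intro x hx
  have : |x| = x := abs_of_pos hx
  simp only [besselDensity, this]
  ring

lemma besselMoment_integrable (k : ℕ) (hk : 1 ≤ k) (he : Even k) :
    Integrable (fun x : ℝ => x ^ k * besselDensity x) := by
  rw [← integrableOn_univ, ← @Iio_union_Ici _ _ (0 : ℝ), integrableOn_union,
    integrableOn_Ici_iff_integrableOn_Ioi]
  refine ⟨?_, besselMoment_integrableOn_Ioi k hk⟩
  rw [← (Measure.measurePreserving_neg (volume : Measure ℝ)).integrableOn_comp_preimage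
      (Homeomorph.neg ℝ).measurableEmbedding]
  simp only [Function.comp_def, neg_preimage, neg_Iio, neg_neg, neg_zero]
  apply (besselMoment_integrableOn_Ioi k hk).congr_fun ?_ measurableSet_Ioi
  intro x _
  simp only [besselDensity, abs_neg, he.neg_pow]

lemma besselMoment_eq (k : ℕ) (hk : 1 ≤ k) (he : Even k) :
    ∫ x : ℝ, x ^ k * besselDensity x
      = (2 * (Nat.factorial k : ℝ) / π)
        * ∫ t in Set.Ioi (0:ℝ), (Real.cosh t)⁻¹ ^ (k+1) := by
  have h1 : ∀ x : ℝ, x ^ k * besselDensity x = (fun y => y ^ k * besselK0 y / π) |x| := by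
    intro x
    dsimp only
    rw [besselDensity, he.pow_abs]
    ring
  rw [funext h1, integral_comp_abs (f := fun y => y ^ k * besselK0 y / π),
    integral_div, K0_moment_value k hk]
  ring

lemma besselM2 : ∫ x : ℝ, x ^ 2 * besselDensity x = 1 := by
  rw [besselMoment_eq 2 (by norm_num) (by decide), integral_sech3]
  have := Real.pi_ne_zero
  rw [show Nat.factorial 2 = 2 from rfl]
  field_simp
  ring

lemma besselM4 : ∫ x : ℝ, x ^ 4 * besselDensity x = 9 := by
  rw [besselMoment_eq 4 (by norm_num) (by decide), integral_sech5]
  have := Real.pi_ne_zero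
  rw [show Nat.factorial 4 = 24 from rfl]
  field_simp
  ring

lemma besselM6 : ∫ x : ℝ, x ^ 6 * besselDensity x = 225 := by
  rw [besselMoment_eq 6 (by norm_num) (by decide), integral_sech7]
  have := Real.pi_ne_zero
  rw [show Nat.factorial 6 = 720 from rfl]
  field_simp
  ring


lemma continuous_tanh : Continuous Real.tanh := by
  rw [show Real.tanh = fun x => Real.sinh x / Real.cosh x from funext Real.tanh_eq_sinh_div_cosh]
  exact Real.continuous_sinh.div Real.continuous_cosh fun x => (Real.cosh_pos x).ne'

lemma abs_tanh_le (y : ℝ) : |Real.tanh y| ≤ |y| := by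
  rcases le_total 0 y with hy | hy
  · rw [abs_of_nonneg (tanh_nonneg' hy), abs_of_nonneg hy]; exact tanh_le_self hy
  · have h1 : 0 ≤ -y := by linarith
    rw [← abs_neg, ← abs_neg y, ← Real.tanh_neg,
      abs_of_nonneg (tanh_nonneg' h1), abs_of_nonneg h1]
    exact tanh_le_self h1

lemma tanh_mul_abs (α x : ℝ) : Real.tanh (α * x) * x = Real.tanh (α * |x|) * |x| := by
  rcases abs_cases x with ⟨h1, _⟩ | ⟨h1, _⟩
  · rw [h1]
  · rw [h1, show α * -x = -(α*x) by ring, Real.tanh_neg]; ring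

theorem m0Exp_bounds (α : ℝ) (hα : α ∈ Set.Ico (0 : ℝ) 0.31) :
    α - 3 * α ^ 3 ≤ m0Exp α ∧ m0Exp α ≤ α - 3 * α ^ 3 / (1 + 8 * α) := by
  obtain ⟨hα0, hα1⟩ := hα
  norm_num at hα1
  have hM2i := besselMoment_integrable 2 (by norm_num) (by decide)
  have hM4i := besselMoment_integrable 4 (by norm_num) (by decide)
  have hM6i := besselMoment_integrable 6 (by norm_num) (by decide)
  -- integrability of main integrand
  have h_int : Integrable (fun x : ℝ => Real.tanh (α * x) * x * besselDensity x) := by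
    apply Integrable.mono' (hM2i.const_mul α)
    · exact (((continuous_tanh.comp (continuous_const.mul continuous_id)).mul
        continuous_id).measurable.mul besselDensity_meas).aestronglyMeasurable
    · filter_upwards with x
      have hD := besselDensity_nonneg x
      rw [Real.norm_eq_abs, abs_mul, abs_of_nonneg hD, abs_mul]
      calc |Real.tanh (α * x)| * |x| * besselDensity x
          ≤ |α * x| * |x| * besselDensity x := by
            apply mul_le_mul_of_nonneg_right
              (mul_le_mul_of_nonneg_right (abs_tanh_le _) (abs_nonneg _)) hD
        _ = α * (x ^ 2 * besselDensity x) := by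
            rw [abs_mul, abs_of_nonneg hα0, ← sq_abs x]
            ring
  -- pointwise lower
  have pt_low : ∀ x : ℝ, α * (x ^ 2 * besselDensity x) - α ^ 3 / 3 * (x ^ 4 * besselDensity x)
      ≤ Real.tanh (α * x) * x * besselDensity x := by
    intro x
    have hD := besselDensity_nonneg x
    set s := |x| with hs
    have hs0 : 0 ≤ s := abs_nonneg x
    have hs2 : s ^ 2 = x ^ 2 := sq_abs x
    have hs4 : s ^ 4 = x ^ 4 := by
      rw [show (4:ℕ) = 2*2 from rfl, pow_mul, pow_mul, hs2]
    have hcore : α * x ^ 2 - α ^ 3 / 3 * x ^ 4 ≤ Real.tanh (α * x) * x := by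
      rw [tanh_mul_abs, ← hs, ← hs2, ← hs4]
      have h := tanh_lower (mul_nonneg hα0 hs0)
      nlinarith [h, hs0]
    calc α * (x ^ 2 * besselDensity x) - α ^ 3 / 3 * (x ^ 4 * besselDensity x)
        = (α * x ^ 2 - α ^ 3 / 3 * x ^ 4) * besselDensity x := by ring
      _ ≤ (Real.tanh (α * x) * x) * besselDensity x :=
          mul_le_mul_of_nonneg_right hcore hD
  -- lower bound
  have hlow : α - 3 * α ^ 3 ≤ m0Exp α := by
    have h := integral_mono
      (f := fun x : ℝ => α * (x ^ 2 * besselDensity x) - α ^ 3 / 3 * (x ^ 4 * besselDensity x))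
      (g := fun x : ℝ => Real.tanh (α * x) * x * besselDensity x)
      ((hM2i.const_mul α).sub (hM4i.const_mul (α ^ 3 / 3))) h_int pt_low
    rw [integral_sub (hM2i.const_mul α) (hM4i.const_mul (α ^ 3 / 3)),
      integral_const_mul, integral_const_mul, besselM2, besselM4] at h
    rw [m0Exp]
    linarith
  refine ⟨hlow, ?_⟩
  -- upper bound
  set l : ℝ := (1 + 25 * α ^ 2)⁻¹ with hl_def
  have h25 : (0:ℝ) < 1 + 25 * α ^ 2 := by positivity
  have hl : l * (1 + 25 * α ^ 2) = 1 := inv_mul_cancel₀ h25.ne'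
  have hl0 : 0 ≤ l := by positivity
  have pt_up : ∀ x : ℝ, Real.tanh (α * x) * x * besselDensity x
      ≤ α * (x ^ 2 * besselDensity x) - α ^ 3 * (2 * l - l ^ 2) / 3 * (x ^ 4 * besselDensity x)
        + α ^ 5 * l ^ 2 / 3 * (x ^ 6 * besselDensity x) := by
    intro x
    have hD := besselDensity_nonneg x
    set s := |x| with hs
    have hs0 : 0 ≤ s := abs_nonneg x
    have hs2 : s ^ 2 = x ^ 2 := sq_abs x
    have hs4 : s ^ 4 = x ^ 4 := by
      rw [show (4:ℕ) = 2*2 from rfl, pow_mul, pow_mul, hs2]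
    have hs6 : s ^ 6 = x ^ 6 := by
      rw [show (6:ℕ) = 2*3 from rfl, pow_mul, pow_mul, hs2]
    have hcore : Real.tanh (α * x) * x
        ≤ α * x ^ 2 - α ^ 3 * (2 * l - l ^ 2) / 3 * x ^ 4 + α ^ 5 * l ^ 2 / 3 * x ^ 6 := by
      rw [tanh_mul_abs, ← hs, ← hs2, ← hs4, ← hs6]
      set c : ℝ := 1 + α ^ 2 * s ^ 2 with hc_def
      have hc : (0:ℝ) < c := by positivity
      set t : ℝ := Real.tanh (α * s) with ht_def
      have ht := tanh_upper (mul_nonneg hα0 hs0)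
      rw [← ht_def] at ht
      -- step I : t * s ≤ B where B := α*s^2 - α^3*s^4/(3*c)
      have hstep1 : t * s ≤ α * s ^ 2 - α ^ 3 * s ^ 4 / (3 * c) := by
        have h1 : 3 * c * (t * s) ≤ 3 * c * (α * s ^ 2 - α ^ 3 * s ^ 4 / (3 * c)) := by
          have he : 3 * c * (α * s ^ 2 - α ^ 3 * s ^ 4 / (3 * c))
              = (α * s) * (3 + 2 * (α * s) ^ 2) * s := by
            field_simp [hc_def]
            ring
          rw [he]
          have := mul_le_mul_of_nonneg_right ht hs0
          calc 3 * c * (t * s) = 3 * (1 + (α * s) ^ 2) * t * s := by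
                rw [hc_def]; ring
            _ ≤ (α * s) * (3 + 2 * (α * s) ^ 2) * s := this
        exact le_of_mul_le_mul_left h1 (by positivity)
      -- step II : B ≤ A
      have hq : c * (2 * l - l ^ 2 * c) ≤ 1 := by nlinarith [sq_nonneg (1 - l * c)]
      have hstep2 : α * s ^ 2 - α ^ 3 * s ^ 4 / (3 * c)
          ≤ α * s ^ 2 - α ^ 3 * (2 * l - l ^ 2) / 3 * s ^ 4 + α ^ 5 * l ^ 2 / 3 * s ^ 6 := by
        have hdiff : (α * s ^ 2 - α ^ 3 * (2 * l - l ^ 2) / 3 * s ^ 4 + α ^ 5 * l ^ 2 / 3 * s ^ 6)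
            - (α * s ^ 2 - α ^ 3 * s ^ 4 / (3 * c))
            = (α ^ 3 * s ^ 4 / 3) * ((1 - c * (2 * l - l ^ 2 * c)) / c) := by
          field_simp [hc_def]
          ring
        have hpos : 0 ≤ (α ^ 3 * s ^ 4 / 3) * ((1 - c * (2 * l - l ^ 2 * c)) / c) := by
          apply mul_nonneg (by positivity)
          apply div_nonneg (by linarith) hc.le
        linarith
      linarith
    calc Real.tanh (α * x) * x * besselDensity x
        = (Real.tanh (α * x) * x) * besselDensity x := by ring
      _ ≤ (α * x ^ 2 - α ^ 3 * (2 * l - l ^ 2) / 3 * x ^ 4 + α ^ 5 * l ^ 2 / 3 * x ^ 6)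
            * besselDensity x := mul_le_mul_of_nonneg_right hcore hD
      _ = _ := by ring
  have hup_int : Integrable (fun x : ℝ =>
      α * (x ^ 2 * besselDensity x) - α ^ 3 * (2 * l - l ^ 2) / 3 * (x ^ 4 * besselDensity x)
        + α ^ 5 * l ^ 2 / 3 * (x ^ 6 * besselDensity x)) :=
    ((hM2i.const_mul α).sub (hM4i.const_mul _)).add (hM6i.const_mul _)
  have hup := integral_mono
    (f := fun x : ℝ => Real.tanh (α * x) * x * besselDensity x)
    (g := fun x : ℝ => α * (x ^ 2 * besselDensity x)
      - α ^ 3 * (2 * l - l ^ 2) / 3 * (x ^ 4 * besselDensity x)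
      + α ^ 5 * l ^ 2 / 3 * (x ^ 6 * besselDensity x))
    h_int hup_int pt_up
  have hA1 : Integrable (fun x : ℝ => α * (x ^ 2 * besselDensity x)) := hM2i.const_mul α
  have hB1 : Integrable (fun x : ℝ =>
      α ^ 3 * (2 * l - l ^ 2) / 3 * (x ^ 4 * besselDensity x)) := hM4i.const_mul _
  have hC1 : Integrable (fun x : ℝ =>
      α ^ 5 * l ^ 2 / 3 * (x ^ 6 * besselDensity x)) := hM6i.const_mul _
  have hAB : Integrable (fun x : ℝ => α * (x ^ 2 * besselDensity x)
      - α ^ 3 * (2 * l - l ^ 2) / 3 * (x ^ 4 * besselDensity x)) := hA1.sub hB1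
  beta_reduce at hup
  rw [integral_add hAB hC1, integral_sub hA1 hB1,
    integral_const_mul, integral_const_mul, integral_const_mul,
    besselM2, besselM4, besselM6] at hup
  rw [m0Exp]
  -- hup : m0 ≤ α*1 - (α^3*(2l-l^2)/3)*9 + (α^5*l^2/3)*225
  have hU : α * 1 - α ^ 3 * (2 * l - l ^ 2) / 3 * 9 + α ^ 5 * l ^ 2 / 3 * 225
      = α - 3 * α ^ 3 * l := by
    linear_combination (3 * α ^ 3 * l) * hl
  have hfin : α - 3 * α ^ 3 * l ≤ α - 3 * α ^ 3 / (1 + 8 * α) := by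
    have h8 : (0:ℝ) < 1 + 8 * α := by linarith
    have key : 0 ≤ 3 * α ^ 3 * l * (8 * α - 25 * α ^ 2) := by
      apply mul_nonneg (by positivity)
      nlinarith
    rw [sub_le_sub_iff_left, div_le_iff₀ h8]
    nlinarith [hl, key]
  linarith
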